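/- Let n, m_a, m_b be positive integers and let a, b : Fin n → ℤ. Suppose there are sets S₁, …, S_{m_a} ⊆ Fin n whose union is Fin n such that a is non-decreasing on each S_i, and sets T₁, …, T_{m_b} ⊆ Fin n whose union is Fin n such that b is non-increasing on each T_j. Then for every k with 0 ≤ k ≤ 2n−2: c_k = min over all pairs (i, j) such that L(i,j,k) = {ℓ ∈ S_i : 0 ≤ k−ℓ ≤ n−1 and k−ℓ ∈ T_j} is nonempty of (a ℓ* + b (k−ℓ*)), where ℓ* is the minimum element of L(i,j,k) and c is the (min,+) convolution of a and b. -/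
import Mathlib


theorem minplus_conv_via_min_witnesses
    (n ma mb : ℕ) (hn : 0 < n) (hma : 0 < ma) (hmb : 0 < mb)
    (a b : Fin n → ℤ)
    (S : Fin ma → Finset (Fin n)) (T : Fin mb → Finset (Fin n))
    (hScover : ∀ ℓ : Fin n, ∃ i : Fin ma, ℓ ∈ S i)
    (hTcover : ∀ ℓ : Fin n, ∃ j : Fin mb, ℓ ∈ T j)
    (hSmono : ∀ i : Fin ma, ∀ ℓ ∈ S i, ∀ ℓ' ∈ S i, ℓ ≤ ℓ' → a ℓ ≤ a ℓ')
    (hTmono : ∀ j : Fin mb, ∀ ℓ ∈ T j, ∀ ℓ' ∈ T j, ℓ ≤ ℓ' → b ℓ ≥ b ℓ')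
    (k : ℕ) (hk : k ≤ 2 * n - 2)
    (L : Fin ma → Fin mb → Finset (Fin n))
    (hLdef : ∀ (i : Fin ma) (j : Fin mb),
      L i j = (S i).filter fun ℓ : Fin n =>
        (ℓ : ℕ) ≤ k ∧ ∃ t : Fin n, (t : ℕ) = k - (ℓ : ℕ) ∧ t ∈ T j)
    (hD : (Finset.univ.filter fun ℓ : Fin n =>
        (ℓ : ℕ) ≤ k ∧ k - (ℓ : ℕ) < n).Nonempty)
    (hP : (Finset.univ.filter fun p : Fin ma × Fin mb =>
        (L p.1 p.2).Nonempty).Nonempty) :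
    ((Finset.univ.filter fun ℓ : Fin n =>
          (ℓ : ℕ) ≤ k ∧ k - (ℓ : ℕ) < n).inf' hD fun ℓ =>
        if h : k - (ℓ : ℕ) < n then a ℓ + b ⟨k - (ℓ : ℕ), h⟩ else 0)
      = (Finset.univ.filter fun p : Fin ma × Fin mb =>
            (L p.1 p.2).Nonempty).inf' hP
          (fun p => if h : (L p.1 p.2).Nonempty then
              (if h' : k - (((L p.1 p.2).min' h : Fin n) : ℕ) < n then
                a ((L p.1 p.2).min' h) +
                  b ⟨k - (((L p.1 p.2).min' h : Fin n) : ℕ), h'⟩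
              else 0)
            else 0) := by
  apply le_antisymm
  · apply Finset.le_inf'
    intro p hp
    simp only [Finset.mem_filter] at hp
    have hne : (L p.1 p.2).Nonempty := hp.2
    have hsub : ∀ x : Fin n, x ∈ L p.1 p.2 →
        x ∈ (S p.1).filter fun ℓ : Fin n =>
          (ℓ : ℕ) ≤ k ∧ ∃ t : Fin n, (t : ℕ) = k - (ℓ : ℕ) ∧ t ∈ T p.2 := by
      intro x hx; rw [hLdef] at hx; exact hx
    have hmem := hsub _ (Finset.min'_mem _ hne)
    simp only [Finset.mem_filter] at hmem
    obtain ⟨hS, hle, t, ht, htT⟩ := hmem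
    have hlt : k - (((L p.1 p.2).min' hne : Fin n) : ℕ) < n := by
      have := t.isLt; omega
    rw [dif_pos hne, dif_pos hlt]
    apply Finset.inf'_le_of_le (b := (L p.1 p.2).min' hne)
    · simp [hle, hlt]
    · rw [dif_pos hlt]
  · apply Finset.le_inf'
    intro ℓ hℓ
    simp only [Finset.mem_filter] at hℓ
    obtain ⟨-, hle, hlt⟩ := hℓ
    obtain ⟨i, hi⟩ := hScover ℓ
    obtain ⟨j, hj⟩ := hTcover ⟨k - ℓ, hlt⟩
    have hℓL : ℓ ∈ L i j := by
      rw [hLdef]; simp only [Finset.mem_filter]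
      exact ⟨hi, hle, ⟨k - ℓ, hlt⟩, rfl, hj⟩
    have hne : (L i j).Nonempty := ⟨ℓ, hℓL⟩
    have hmmem : (L i j).min' hne ∈ L i j := Finset.min'_mem _ _
    have hmle : (L i j).min' hne ≤ ℓ := Finset.min'_le _ _ hℓL
    have hsub : ∀ x : Fin n, x ∈ L i j →
        x ∈ (S i).filter fun ℓ : Fin n =>
          (ℓ : ℕ) ≤ k ∧ ∃ t : Fin n, (t : ℕ) = k - (ℓ : ℕ) ∧ t ∈ T j := by
      intro x hx; rw [hLdef] at hx; exact hx
    have hmmem2 := hsub _ hmmem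
    simp only [Finset.mem_filter] at hmmem2
    obtain ⟨hmS, hmk, t, ht, htT⟩ := hmmem2
    have hmlt : k - (((L i j).min' hne : Fin n) : ℕ) < n := by
      have := t.isLt; omega
    apply Finset.inf'_le_of_le (b := (i, j))
    · simp [hne]
    · rw [dif_pos hne, dif_pos hmlt, dif_pos hlt]
      have ha : a ((L i j).min' hne) ≤ a ℓ := hSmono i _ hmS ℓ hi hmle
      have hb : b ⟨k - (((L i j).min' hne : Fin n) : ℕ), hmlt⟩ ≤ b ⟨k - (ℓ : ℕ), hlt⟩ := by
        have hord : (⟨k - (ℓ : ℕ), hlt⟩ : Fin n) ≤ ⟨k - (((L i j).min' hne : Fin n) : ℕ), hmlt⟩ := by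
          have : ((L i j).min' hne : ℕ) ≤ (ℓ : ℕ) := hmle
          simp only [Fin.le_def]; omega
        have htm : t = (⟨k - (((L i j).min' hne : Fin n) : ℕ), hmlt⟩ : Fin n) := Fin.ext ht
        exact hTmono j _ hj _ (htm ▸ htT) hord
      exact add_le_add ha hb
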